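/- Let T ∈ B(ℓ²(ℤ)) be a bounded operator such that T p_k = U p_k for every k ∈ ℕ and T v = U v for every v in the one-dimensional subspace spanned by e_{−1}. Then T = U. -/

import Mathlib

noncomputable section

/-- `ℓ²(ℤ)` with complex coefficients. -/
abbrev H : Type := lp (fun _ : ℤ => ℂ) 2

/-- The standard orthonormal basis vectors `e n` of `ℓ²(ℤ)`. -/
def e (n : ℤ) : H := lp.single 2 n 1

/-- If a bounded operator `T` on `ℓ²(ℤ)` satisfies `T p_k = U p_k` for all `k` and
agrees with `U` on the one-dimensional subspace spanned by `e_{−1}`, then `T = U`. -/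
theorem eq_U_of_agree_on_pk_and_e_neg_one
    (U S₂ : H →L[ℂ] H)
    (hU : ∀ n : ℤ, U (e n) = e (n + 1))
    (hS₂ : ∀ (f : H) (n : ℤ), S₂ f n = if Even n then f (n / 2) else 0)
    (p : ℕ → H →L[ℂ] H)
    (hp : ∀ k : ℕ, p k = (U * S₂) ^ k * (S₂ * ContinuousLinearMap.adjoint S₂) *
      (ContinuousLinearMap.adjoint (U * S₂)) ^ k)
    (T : H →L[ℂ] H)
    (hTp : ∀ k : ℕ, T * p k = U * p k)
    (hTe : ∀ v ∈ Submodule.span ℂ ({e (-1)} : Set H), T v = U v) :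
    T = U := by
  classical
  have coord : ∀ (f : H) (n : ℤ), (inner ℂ (e n) f : ℂ) = f n := by
    intro f n
    simp [e, lp.inner_single_left]
  have hext : ∀ (f g : H), (∀ n, f n = g n) → f = g := fun f g h => lp.ext (funext h)
  have e_apply : ∀ n m : ℤ, e n m = if m = n then (1 : ℂ) else 0 := by
    intro n m
    simp [e, lp.single_apply, Pi.single_apply]
  -- S₂ on basis vectors
  have hS₂e : ∀ n : ℤ, S₂ (e n) = e (2 * n) := by
    intro n
    apply hext; intro m
    rw [hS₂, e_apply n, e_apply (2 * n)]
    by_cases he : Even m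
    · obtain ⟨c, rfl⟩ := he
      rw [if_pos ⟨c, rfl⟩]
      have hdiv : (c + c) / 2 = c := by omega
      rw [hdiv]
      by_cases h : c = n
      · subst h; rw [if_pos rfl, if_pos (by omega)]
      · rw [if_neg h, if_neg (by omega)]
    · rw [if_neg he, if_neg (by rintro rfl; exact he ⟨n, two_mul n⟩)]
  -- adjoint of S₂ coordinatewise
  have hS₂adj : ∀ (g : H) (n : ℤ), (ContinuousLinearMap.adjoint S₂) g n = g (2 * n) := by
    intro g n
    rw [← coord, ContinuousLinearMap.adjoint_inner_right, hS₂e, coord]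
  -- adjoint of U*S₂ coordinatewise
  have hAe : ∀ n : ℤ, (U * S₂) (e n) = e (2 * n + 1) := by
    intro n
    rw [ContinuousLinearMap.mul_apply, hS₂e, hU]
  have hAadj : ∀ (g : H) (n : ℤ), (ContinuousLinearMap.adjoint (U * S₂)) g n = g (2 * n + 1) := by
    intro g n
    rw [← coord, ContinuousLinearMap.adjoint_inner_right, hAe, coord]
  -- powers of U*S₂ on basis vectors
  have hApow : ∀ (k : ℕ) (n : ℤ), ((U * S₂) ^ k) (e n) = e (2 ^ k * (n + 1) - 1) := by
    intro k
    induction k with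
    | zero => intro n; simp
    | succ k ih =>
        intro n
        rw [pow_succ, ContinuousLinearMap.mul_apply, hAe, ih]
        congr 1
        push_cast [pow_succ]
        ring
  -- powers of the adjoint of U*S₂ on suitable basis vectors
  have hAadjpow : ∀ (k : ℕ) (q : ℤ),
      ((ContinuousLinearMap.adjoint (U * S₂)) ^ k) (e (2 ^ k * q - 1)) = e (q - 1) := by
    intro k
    induction k with
    | zero => intro q; simp
    | succ k ih =>
        intro q
        rw [pow_succ, ContinuousLinearMap.mul_apply]
        have step : (ContinuousLinearMap.adjoint (U * S₂)) (e (2 ^ (k + 1) * q - 1)) =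
            e (2 ^ k * q - 1) := by
          apply hext; intro m
          rw [hAadj, e_apply, e_apply]
          have h2 : (2 : ℤ) ^ (k + 1) * q - 1 = 2 * (2 ^ k * q - 1) + 1 := by
            rw [pow_succ]; ring
          rw [h2]
          set s : ℤ := 2 ^ k * q - 1 with hs
          by_cases h : m = s
          · rw [if_pos (by omega), if_pos h]
          · rw [if_neg (by omega), if_neg h]
        rw [step, ih]
  -- p k fixes e (2^k * q - 1) for odd q
  have hpk : ∀ (k : ℕ) (q : ℤ), Odd q → p k (e (2 ^ k * q - 1)) = e (2 ^ k * q - 1) := by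
    intro k q hq
    rw [hp, ContinuousLinearMap.mul_apply, ContinuousLinearMap.mul_apply, hAadjpow,
      ContinuousLinearMap.mul_apply]
    obtain ⟨r, hr⟩ := hq
    have hq1 : q - 1 = 2 * r := by omega
    have hS₂adje : (ContinuousLinearMap.adjoint S₂) (e (q - 1)) = e r := by
      apply hext; intro m
      rw [hS₂adj, e_apply, e_apply]
      by_cases h : m = r
      · rw [if_pos (by omega), if_pos h]
      · rw [if_neg (by omega), if_neg h]
    rw [hS₂adje, hS₂e, ← hq1, hApow]
    norm_num
  -- T agrees with U on every basis vector
  have hTeU : ∀ n : ℤ, T (e n) = U (e n) := by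
    intro n
    by_cases hn : n = -1
    · subst hn
      exact hTe _ (Submodule.mem_span_singleton_self _)
    · have ha : n + 1 ≠ 0 := by omega
      obtain ⟨k, b, hb2, hab⟩ := Nat.exists_eq_pow_mul_and_not_dvd
        (Int.natAbs_ne_zero.mpr ha) 2 (by norm_num)
      have hbodd : Odd (b : ℤ) := by
        rcases Int.even_or_odd (b : ℤ) with h | h
        · exact absurd (show 2 ∣ b by exact_mod_cast h.two_dvd) hb2
        · exact h
      have habs : ((n + 1).natAbs : ℤ) = 2 ^ k * (b : ℤ) := by exact_mod_cast hab
      have hcases : n + 1 = 2 ^ k * (b : ℤ) ∨ n + 1 = 2 ^ k * (-(b : ℤ)) := by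
        rcases Int.natAbs_eq (n + 1) with h | h
        · left; rw [h, habs]
        · right; rw [h, habs]; ring
      obtain ⟨q, hqodd, hqn⟩ : ∃ q : ℤ, Odd q ∧ n = 2 ^ k * q - 1 := by
        rcases hcases with h | h
        · exact ⟨(b : ℤ), hbodd, by omega⟩
        · exact ⟨-(b : ℤ), hbodd.neg, by omega⟩
      have h1 : T (p k (e n)) = U (p k (e n)) := by
        have := hTp k
        calc T (p k (e n)) = (T * p k) (e n) := rfl
          _ = (U * p k) (e n) := by rw [this]
          _ = U (p k (e n)) := rfl
      rw [hqn] at h1 ⊢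
      rwa [hpk k q hqodd] at h1
  -- density of the span of the basis vectors
  have hdense : Dense (↑(Submodule.span ℂ (Set.range e)) : Set H) := by
    rw [Submodule.dense_iff_topologicalClosure_eq_top,
      Submodule.topologicalClosure_eq_top_iff]
    rw [Submodule.eq_bot_iff]
    intro x hx
    apply hext; intro n
    have := (Submodule.mem_orthogonal _ x).mp hx (e n) (Submodule.subset_span ⟨n, rfl⟩)
    rw [coord] at this
    simpa using this
  exact ContinuousLinearMap.ext_on hdense (by rintro _ ⟨n, rfl⟩; exact hTeU n)

end
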